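/- Let d ≥ 3 be an integer. Then there exists a constant C = C(d) > 0 such that for every integer m ∈ ℤ, the function t ↦ |J_m(t)|^d is integrable on [1,∞) and ∫₁^∞ |J_m(t)|^d dt ≤ C. -/

import Mathlib

set_option maxHeartbeats 1000000

open MeasureTheory

/-- The Bessel function `J_m(t) = (1/2π)∫₀^{2π} e^{-imk - i t sin k} dk` for `m ∈ ℤ`. -/
noncomputable def besselJ (m : ℤ) (t : ℝ) : ℂ :=
  (1 / (2 * Real.pi)) * ∫ k in (0:ℝ)..(2 * Real.pi),
    Complex.exp (-Complex.I * m * k - Complex.I * t * Real.sin k)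


open MeasureTheory intervalIntegral Set

section osc

variable {ψ d1 d2 : ℝ → ℝ}

lemma expIψ_norm (ψx : ℝ) : ‖Complex.exp (Complex.I * ψx)‖ = 1 := by
  rw [Complex.norm_exp]
  simp [Complex.mul_re]

lemma hasDerivAt_expI (hd1 : ∀ x, HasDerivAt ψ (d1 x) x) (x : ℝ) :
    HasDerivAt (fun y => Complex.exp (Complex.I * ψ y))
      (Complex.exp (Complex.I * ψ x) * (Complex.I * d1 x)) x := by
  have h1 : HasDerivAt (fun y => (Complex.I * ψ y : ℂ)) (Complex.I * d1 x) x :=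
    ((hd1 x).ofReal_comp).const_mul Complex.I
  simpa [mul_comm] using h1.cexp

lemma continuous_expI (hd1 : ∀ x, HasDerivAt ψ (d1 x) x) :
    Continuous fun y => Complex.exp (Complex.I * ψ y) := by
  have hc : Continuous ψ := continuous_iff_continuousAt.2 fun x => (hd1 x).continuousAt
  exact Complex.continuous_exp.comp (continuous_const.mul (Complex.continuous_ofReal.comp hc))

lemma ibp_eq (hd1 : ∀ x, HasDerivAt ψ (d1 x) x) (hd2 : ∀ x, HasDerivAt d1 (d2 x) x)
    (hc2 : Continuous d2) {a b : ℝ} (hab : a ≤ b) (hne : ∀ x ∈ Icc a b, d1 x ≠ 0) :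
    ∫ x in a..b, Complex.exp (Complex.I * ψ x) =
      Complex.exp (Complex.I * ψ b) / (Complex.I * d1 b)
      - Complex.exp (Complex.I * ψ a) / (Complex.I * d1 a)
      - ∫ x in a..b, Complex.exp (Complex.I * ψ x) * (Complex.I * (d2 x / (d1 x) ^ 2)) := by
  have hc1 : Continuous d1 := continuous_iff_continuousAt.2 fun x => (hd2 x).continuousAt
  have huIcc : uIcc a b = Icc a b := uIcc_of_le hab
  have hF : ∀ x ∈ uIcc a b, HasDerivAt
      (fun y => Complex.exp (Complex.I * ψ y) / (Complex.I * d1 y))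
      (Complex.exp (Complex.I * ψ x) + Complex.exp (Complex.I * ψ x) * (Complex.I * (d2 x / (d1 x) ^ 2))) x := by
    intro x hx
    rw [huIcc] at hx
    have hxne : d1 x ≠ 0 := hne x hx
    have hvne : (Complex.I * d1 x : ℂ) ≠ 0 := by
      simp [Complex.I_ne_zero, Complex.ofReal_eq_zero, hxne]
    have hu := hasDerivAt_expI hd1 x
    have hv : HasDerivAt (fun y => (Complex.I * d1 y : ℂ)) (Complex.I * d2 x) x :=
      ((hd2 x).ofReal_comp).const_mul Complex.I
    have : HasDerivAt (fun y => Complex.exp (Complex.I * ψ y) / (Complex.I * d1 y)) _ x := hu.div hv hvne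
    convert this using 1
    have hune : (d1 x : ℂ) ≠ 0 := Complex.ofReal_ne_zero.mpr hxne
    field_simp [hune]
    ring_nf
    have h3 : (Complex.I) ^ 3 = -Complex.I := by rw [pow_succ, Complex.I_sq]; ring
    rw [Complex.I_sq]; ring
  have hcont_integrand : Continuous fun x => Complex.exp (Complex.I * ψ x) :=
    continuous_expI hd1
  have hcontOn : ContinuousOn
      (fun x => Complex.exp (Complex.I * ψ x) * (Complex.I * (d2 x / (d1 x) ^ 2))) (uIcc a b) := by
    rw [huIcc]
    apply ContinuousOn.mul hcont_integrand.continuousOn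
    apply ContinuousOn.mul continuousOn_const
    exact ContinuousOn.div (Complex.continuous_ofReal.comp hc2).continuousOn
      (((Complex.continuous_ofReal.comp hc1).pow 2).continuousOn)
      (fun x hx => pow_ne_zero 2 (Complex.ofReal_ne_zero.mpr (hne x hx)))
  have hint2 : IntervalIntegrable
      (fun x => Complex.exp (Complex.I * ψ x) * (Complex.I * (d2 x / (d1 x) ^ 2))) volume a b :=
    hcontOn.intervalIntegrable
  have hint1 : IntervalIntegrable (fun x => Complex.exp (Complex.I * ψ x)) volume a b :=
    hcont_integrand.intervalIntegrable _ _
  have hFTC := integral_eq_sub_of_hasDerivAt hF (hint1.add hint2)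
  rw [integral_add hint1 hint2] at hFTC
  linear_combination hFTC

end osc

section osc2

variable {ψ d1 d2 : ℝ → ℝ} {a b lam : ℝ}

lemma integrand_norm (hd1 : ∀ x, HasDerivAt ψ (d1 x) x) (x : ℝ) :
    ‖Complex.exp (Complex.I * ψ x) * (Complex.I * (d2 x / (d1 x) ^ 2))‖
      = |d2 x| / (d1 x) ^ 2 := by
  rw [norm_mul, expIψ_norm, one_mul, norm_mul, Complex.norm_I, one_mul]
  rw [show ((d2 x : ℂ) / (d1 x : ℂ) ^ 2) = ((d2 x / (d1 x)^2 : ℝ) : ℂ) by push_cast; ring]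
  rw [Complex.norm_real, Real.norm_eq_abs, abs_div, abs_pow, sq_abs]

lemma osc_crude (hd1 : ∀ x, HasDerivAt ψ (d1 x) x) (hd2 : ∀ x, HasDerivAt d1 (d2 x) x)
    (hc2 : Continuous d2) (hab : a ≤ b) (hlam : 0 < lam)
    (h : ∀ x ∈ Set.Icc a b, lam ≤ |d1 x|) :
    ‖∫ x in a..b, Complex.exp (Complex.I * ψ x)‖
      ≤ 2 / lam + (∫ x in a..b, |d2 x|) / lam ^ 2 := by
  have hc1 : Continuous d1 := continuous_iff_continuousAt.2 fun x => (hd2 x).continuousAt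
  have hne : ∀ x ∈ Set.Icc a b, d1 x ≠ 0 := fun x hx => by
    have := h x hx; intro h0; rw [h0] at this; simp at this; linarith
  rw [ibp_eq hd1 hd2 hc2 hab hne]
  have hbd : ∀ x ∈ Set.Icc a b, ‖Complex.exp (Complex.I * ψ x) / (Complex.I * d1 x)‖ ≤ 1 / lam := by
    intro x hx
    rw [norm_div, expIψ_norm, norm_mul, Complex.norm_I, one_mul, Complex.norm_real,
      Real.norm_eq_abs]
    apply div_le_div_of_nonneg_left zero_le_one hlam (h x hx) |>.trans_eq rfl
  have hgcont : ContinuousOn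
      (fun x => Complex.exp (Complex.I * ψ x) * (Complex.I * (d2 x / (d1 x) ^ 2))) (Set.uIcc a b) := by
    rw [Set.uIcc_of_le hab]
    apply ContinuousOn.mul (continuous_expI hd1).continuousOn
    apply ContinuousOn.mul continuousOn_const
    exact ContinuousOn.div (Complex.continuous_ofReal.comp hc2).continuousOn
      (((Complex.continuous_ofReal.comp hc1).pow 2).continuousOn)
      (fun x hx => pow_ne_zero 2 (Complex.ofReal_ne_zero.mpr (hne x hx)))
  have hnormint : ‖∫ x in a..b, Complex.exp (Complex.I * ψ x) * (Complex.I * (d2 x / (d1 x) ^ 2))‖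
      ≤ (∫ x in a..b, |d2 x|) / lam ^ 2 := by
    calc ‖∫ x in a..b, Complex.exp (Complex.I * ψ x) * (Complex.I * (d2 x / (d1 x) ^ 2))‖
        ≤ ∫ x in a..b, ‖Complex.exp (Complex.I * ψ x) * (Complex.I * (d2 x / (d1 x) ^ 2))‖ :=
          intervalIntegral.norm_integral_le_integral_norm hab
    _ ≤ ∫ x in a..b, |d2 x| / lam ^ 2 := by
        apply intervalIntegral.integral_mono_on hab hgcont.norm.intervalIntegrable
          ((hc2.abs.div_const _).intervalIntegrable a b)
        intro x hx
        rw [integrand_norm hd1]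
        apply div_le_div_of_nonneg_left (abs_nonneg _) (by positivity)
        calc lam ^ 2 = lam * lam := sq lam
        _ ≤ |d1 x| * |d1 x| := mul_le_mul (h x hx) (h x hx) hlam.le (abs_nonneg _)
        _ = (d1 x) ^ 2 := by rw [← sq_abs]; ring
    _ = (∫ x in a..b, |d2 x|) / lam ^ 2 := by
        rw [intervalIntegral.integral_div]
  calc ‖_‖ ≤ ‖Complex.exp (Complex.I * ψ b) / (Complex.I * d1 b)
        - Complex.exp (Complex.I * ψ a) / (Complex.I * d1 a)‖
        + ‖∫ x in a..b, Complex.exp (Complex.I * ψ x) * (Complex.I * (d2 x / (d1 x) ^ 2))‖ :=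
      norm_sub_le _ _
  _ ≤ (1/lam + 1/lam) + (∫ x in a..b, |d2 x|) / lam ^ 2 := by
      apply add_le_add _ hnormint
      exact (norm_sub_le _ _).trans (add_le_add (hbd b ⟨hab, le_refl b⟩) (hbd a ⟨le_refl a, hab⟩))
  _ = 2 / lam + (∫ x in a..b, |d2 x|) / lam ^ 2 := by ring

end osc2

section osc3

variable {ψ d1 d2 : ℝ → ℝ} {a b lam : ℝ}

lemma osc_mono_pos (hd1 : ∀ x, HasDerivAt ψ (d1 x) x) (hd2 : ∀ x, HasDerivAt d1 (d2 x) x)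
    (hc2 : Continuous d2) (hab : a ≤ b) (hlam : 0 < lam)
    (h : ∀ x ∈ Set.Icc a b, lam ≤ d1 x)
    (hsgn : (∀ x ∈ Set.Icc a b, 0 ≤ d2 x) ∨ (∀ x ∈ Set.Icc a b, d2 x ≤ 0)) :
    ‖∫ x in a..b, Complex.exp (Complex.I * ψ x)‖ ≤ 3 / lam := by
  have hc1 : Continuous d1 := continuous_iff_continuousAt.2 fun x => (hd2 x).continuousAt
  have hpos : ∀ x ∈ Set.Icc a b, 0 < d1 x := fun x hx => lt_of_lt_of_le hlam (h x hx)
  have hne : ∀ x ∈ Set.Icc a b, d1 x ≠ 0 := fun x hx => ne_of_gt (hpos x hx)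
  rw [ibp_eq hd1 hd2 hc2 hab hne]
  -- FTC for 1/d1
  have hinv : ∀ x ∈ Set.uIcc a b, HasDerivAt (fun y => -(d1 y)⁻¹) (d2 x / (d1 x) ^ 2) x := by
    intro x hx
    rw [Set.uIcc_of_le hab] at hx
    have : HasDerivAt (fun y => -(d1 y)⁻¹) _ x := ((hd2 x).inv (hne x hx)).neg
    convert this using 1
    ring
  have hquotcont : ContinuousOn (fun x => d2 x / (d1 x) ^ 2) (Set.uIcc a b) := by
    rw [Set.uIcc_of_le hab]
    exact hc2.continuousOn.div ((hc1.pow 2).continuousOn)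
      (fun x hx => pow_ne_zero 2 (hne x hx))
  have hFTC : ∫ x in a..b, d2 x / (d1 x) ^ 2 = (d1 a)⁻¹ - (d1 b)⁻¹ := by
    rw [intervalIntegral.integral_eq_sub_of_hasDerivAt hinv hquotcont.intervalIntegrable]
    ring
  have hkey : (∫ x in a..b, |d2 x| / (d1 x) ^ 2) ≤ 1 / lam := by
    rcases hsgn with hs | hs
    · have : ∀ x ∈ Set.uIcc a b, |d2 x| / (d1 x)^2 = d2 x / (d1 x)^2 := by
        intro x hx; rw [Set.uIcc_of_le hab] at hx; rw [abs_of_nonneg (hs x hx)]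
      rw [intervalIntegral.integral_congr this, hFTC]
      have h1 : (d1 a)⁻¹ ≤ 1/lam := by
        rw [one_div]
        exact inv_anti₀ hlam (h a ⟨le_refl a, hab⟩)
      have h2 : 0 < (d1 b)⁻¹ := inv_pos.2 (hpos b ⟨hab, le_refl b⟩)
      linarith
    · have : ∀ x ∈ Set.uIcc a b, |d2 x| / (d1 x)^2 = -(d2 x / (d1 x)^2) := by
        intro x hx; rw [Set.uIcc_of_le hab] at hx; rw [abs_of_nonpos (hs x hx)]; ring
      rw [intervalIntegral.integral_congr this, intervalIntegral.integral_neg, hFTC]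
      have h1 : (d1 b)⁻¹ ≤ 1/lam := by
        rw [one_div]
        exact inv_anti₀ hlam (h b ⟨hab, le_refl b⟩)
      have h2 : 0 < (d1 a)⁻¹ := inv_pos.2 (hpos a ⟨le_refl a, hab⟩)
      linarith
  have hbd : ∀ x ∈ Set.Icc a b, ‖Complex.exp (Complex.I * ψ x) / (Complex.I * d1 x)‖ ≤ 1 / lam := by
    intro x hx
    rw [norm_div, expIψ_norm, norm_mul, Complex.norm_I, one_mul, Complex.norm_real,
      Real.norm_eq_abs]
    exact div_le_div_of_nonneg_left zero_le_one hlam ((h x hx).trans (le_abs_self _))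
  have hgcont : ContinuousOn
      (fun x => Complex.exp (Complex.I * ψ x) * (Complex.I * (d2 x / (d1 x) ^ 2))) (Set.uIcc a b) := by
    rw [Set.uIcc_of_le hab]
    apply ContinuousOn.mul (continuous_expI hd1).continuousOn
    apply ContinuousOn.mul continuousOn_const
    exact ContinuousOn.div (Complex.continuous_ofReal.comp hc2).continuousOn
      (((Complex.continuous_ofReal.comp hc1).pow 2).continuousOn)
      (fun x hx => pow_ne_zero 2 (Complex.ofReal_ne_zero.mpr (hne x hx)))
  have hnormint : ‖∫ x in a..b, Complex.exp (Complex.I * ψ x) * (Complex.I * (d2 x / (d1 x) ^ 2))‖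
      ≤ 1 / lam := by
    calc ‖∫ x in a..b, Complex.exp (Complex.I * ψ x) * (Complex.I * (d2 x / (d1 x) ^ 2))‖
        ≤ ∫ x in a..b, ‖Complex.exp (Complex.I * ψ x) * (Complex.I * (d2 x / (d1 x) ^ 2))‖ :=
          intervalIntegral.norm_integral_le_integral_norm hab
    _ = ∫ x in a..b, |d2 x| / (d1 x) ^ 2 := by
        apply intervalIntegral.integral_congr
        intro x hx
        exact integrand_norm hd1 x
    _ ≤ 1 / lam := hkey
  calc ‖_‖ ≤ ‖Complex.exp (Complex.I * ψ b) / (Complex.I * d1 b)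
        - Complex.exp (Complex.I * ψ a) / (Complex.I * d1 a)‖
        + ‖∫ x in a..b, Complex.exp (Complex.I * ψ x) * (Complex.I * (d2 x / (d1 x) ^ 2))‖ :=
      norm_sub_le _ _
  _ ≤ (1/lam + 1/lam) + 1/lam := by
      apply add_le_add _ hnormint
      exact (norm_sub_le _ _).trans (add_le_add (hbd b ⟨hab, le_refl b⟩) (hbd a ⟨le_refl a, hab⟩))
  _ = 3 / lam := by ring

lemma interval_integral_conj (f : ℝ → ℂ) (a b : ℝ) :
    ∫ x in a..b, (starRingEnd ℂ) (f x) = (starRingEnd ℂ) (∫ x in a..b, f x) := by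
  simp only [intervalIntegral, ← integral_conj, map_sub]

lemma norm_osc_neg_phase (ψ : ℝ → ℝ) (a b : ℝ) :
    ‖∫ x in a..b, Complex.exp (Complex.I * (-(ψ x) : ℝ))‖
      = ‖∫ x in a..b, Complex.exp (Complex.I * ψ x)‖ := by
  have : ∀ x : ℝ, Complex.exp (Complex.I * (-(ψ x) : ℝ))
      = (starRingEnd ℂ) (Complex.exp (Complex.I * ψ x)) := by
    intro x
    rw [← Complex.exp_conj]
    congr 1
    simp [Complex.conj_I, map_mul]
    try push_cast
    try ring
  rw [intervalIntegral.integral_congr (fun x _ => this x), interval_integral_conj]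
  exact RCLike.norm_conj _

lemma osc_mono_neg (hd1 : ∀ x, HasDerivAt ψ (d1 x) x) (hd2 : ∀ x, HasDerivAt d1 (d2 x) x)
    (hc2 : Continuous d2) (hab : a ≤ b) (hlam : 0 < lam)
    (h : ∀ x ∈ Set.Icc a b, d1 x ≤ -lam)
    (hsgn : (∀ x ∈ Set.Icc a b, 0 ≤ d2 x) ∨ (∀ x ∈ Set.Icc a b, d2 x ≤ 0)) :
    ‖∫ x in a..b, Complex.exp (Complex.I * ψ x)‖ ≤ 3 / lam := by
  rw [← norm_osc_neg_phase ψ a b]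
  have : ∀ x : ℝ, (-(ψ x) : ℝ) = ((fun y => -(ψ y)) x : ℝ) := fun x => rfl
  apply osc_mono_pos (ψ := fun y => -(ψ y)) (d1 := fun y => -(d1 y)) (d2 := fun y => -(d2 y))
    (fun x => (hd1 x).neg) (fun x => (hd2 x).neg) hc2.neg hab hlam
  · intro x hx
    have := h x hx; linarith
  · rcases hsgn with hs | hs
    · right; intro x hx; have := hs x hx; linarith
    · left; intro x hx; have := hs x hx; linarith

end osc3

section vdc

variable {ψ d1 d2 : ℝ → ℝ} {a b lam : ℝ}

lemma vdc2_pos (hd1 : ∀ x, HasDerivAt ψ (d1 x) x) (hd2 : ∀ x, HasDerivAt d1 (d2 x) x)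
    (hc2 : Continuous d2) (hab : a ≤ b) (hlam : 0 < lam)
    (h : ∀ x ∈ Set.Icc a b, lam ≤ d2 x) :
    ‖∫ x in a..b, Complex.exp (Complex.I * ψ x)‖ ≤ 10 / Real.sqrt lam := by
  classical
  have hc1 : Continuous d1 := continuous_iff_continuousAt.2 fun x => (hd2 x).continuousAt
  set r := Real.sqrt lam with hr
  have hrpos : 0 < r := Real.sqrt_pos.2 hlam
  -- gap estimate
  have hgap : ∀ x ∈ Set.Icc a b, ∀ y ∈ Set.Icc a b, x ≤ y → lam * (y - x) ≤ d1 y - d1 x := by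
    intro x hx y hy hxy
    have hsub : Set.Icc x y ⊆ Set.Icc a b := Set.Icc_subset_Icc hx.1 hy.2
    have hFTC : ∫ s in x..y, d2 s = d1 y - d1 x := by
      apply intervalIntegral.integral_eq_sub_of_hasDerivAt
      · intro s hs; exact hd2 s
      · exact hc2.intervalIntegrable x y
    rw [← hFTC]
    calc lam * (y - x) = ∫ _ in x..y, lam := by rw [intervalIntegral.integral_const, smul_eq_mul]; ring
    _ ≤ ∫ s in x..y, d2 s := by
        apply intervalIntegral.integral_mono_on hxy intervalIntegrable_const
          (hc2.intervalIntegrable x y)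
        intro s hs; exact h s (hsub hs)
  have hmono : ∀ x ∈ Set.Icc a b, ∀ y ∈ Set.Icc a b, x ≤ y → d1 x ≤ d1 y := by
    intro x hx y hy hxy
    have := hgap x hx y hy hxy
    nlinarith
  -- define c and d
  set S := Set.Icc a b ∩ d1 ⁻¹' (Set.Iic (-r)) with hS
  set T := Set.Icc a b ∩ d1 ⁻¹' (Set.Ici r) with hT
  have hSclosed : IsClosed S := (isClosed_Icc).inter (isClosed_Iic.preimage hc1)
  have hTclosed : IsClosed T := (isClosed_Icc).inter (isClosed_Ici.preimage hc1)
  set c := if hn : S.Nonempty then sSup S else a with hc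
  set d := if hn : T.Nonempty then sInf T else b with hd
  have hcmem : c ∈ Set.Icc a b := by
    rw [hc]; split
    · next hn => exact (hSclosed.csSup_mem hn (BddAbove.mono Set.inter_subset_left bddAbove_Icc)).1
    · exact ⟨le_refl a, hab⟩
  have hdmem : d ∈ Set.Icc a b := by
    rw [hd]; split
    · next hn => exact (hTclosed.csInf_mem hn (BddBelow.mono Set.inter_subset_left bddBelow_Icc)).1
    · exact ⟨hab, le_refl b⟩
  have hcS : S.Nonempty → c ∈ S := by
    intro hn; rw [hc, dif_pos hn]
    exact hSclosed.csSup_mem hn (BddAbove.mono Set.inter_subset_left bddAbove_Icc)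
  have hdT : T.Nonempty → d ∈ T := by
    intro hn; rw [hd, dif_pos hn]
    exact hTclosed.csInf_mem hn (BddBelow.mono Set.inter_subset_left bddBelow_Icc)
  have hcd : c ≤ d := by
    by_cases hnT : T.Nonempty
    · by_cases hnS : S.Nonempty
      · have hcS' := hcS hnS; have hdT' := hdT hnT
        by_contra hlt
        push_neg at hlt
        have := hmono d hdT'.1 c hcS'.1 hlt.le
        have h1 : d1 c ≤ -r := hcS'.2
        have h2 : r ≤ d1 d := hdT'.2
        linarith
      · rw [hc, dif_neg hnS]; exact hdmem.1
    · rw [hd, dif_neg hnT]; exact hcmem.2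
  -- length bound
  have hlen : d - c ≤ 4 * r / lam := by
    rcases eq_or_lt_of_le hcd with heq | hlt
    · rw [← heq]; simp; positivity
    · set x := c + (d - c)/4 with hx
      set y := d - (d - c)/4 with hy
      have hxy : x ≤ y := by rw [hx, hy]; linarith
      have hxmem : x ∈ Set.Icc a b := ⟨le_trans hcmem.1 (by rw [hx]; linarith),
        le_trans (by rw [hx]; linarith : x ≤ d) hdmem.2⟩
      have hymem : y ∈ Set.Icc a b := ⟨le_trans hcmem.1 (by rw [hy]; linarith),
        le_trans (by rw [hy]; linarith : y ≤ d) hdmem.2⟩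
      have hxnotS : x ∉ S := by
        intro hxS
        have : x ≤ c := by
          have hn : S.Nonempty := ⟨x, hxS⟩
          rw [hc, dif_pos hn]
          exact le_csSup (BddAbove.mono Set.inter_subset_left bddAbove_Icc) hxS
        rw [hx] at this; linarith
      have hynotT : y ∉ T := by
        intro hyT
        have : d ≤ y := by
          have hn : T.Nonempty := ⟨y, hyT⟩
          rw [hd, dif_pos hn]
          exact csInf_le (BddBelow.mono Set.inter_subset_left bddBelow_Icc) hyT
        rw [hy] at this; linarith
      have h1 : -r < d1 x := by
        by_contra hcon; push_neg at hcon
        exact hxnotS ⟨hxmem, hcon⟩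
      have h2 : d1 y < r := by
        by_contra hcon; push_neg at hcon
        exact hynotT ⟨hymem, hcon⟩
      have := hgap x hxmem y hymem hxy
      have hyx : y - x = (d - c)/2 := by rw [hx, hy]; ring
      rw [hyx] at this
      have : lam * ((d-c)/2) < 2 * r := by linarith
      rw [le_div_iff₀ hlam]
      nlinarith
  -- side bounds
  have hintegrable : ∀ u v : ℝ, IntervalIntegrable (fun x => Complex.exp (Complex.I * ψ x)) volume u v :=
    fun u v => (continuous_expI hd1).intervalIntegrable u v
  have hside1 : ‖∫ x in a..c, Complex.exp (Complex.I * ψ x)‖ ≤ 3 / r := by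
    by_cases hnS : S.Nonempty
    · apply osc_mono_neg hd1 hd2 hc2 hcmem.1 hrpos
      · intro x hx
        have hxab : x ∈ Set.Icc a b := ⟨hx.1, le_trans hx.2 hcmem.2⟩
        have := hmono x hxab c hcmem hx.2
        have h1 : d1 c ≤ -r := (hcS hnS).2
        linarith
      · left; intro x hx
        exact le_trans hlam.le (h x ⟨hx.1, le_trans hx.2 hcmem.2⟩)
    · rw [hc, dif_neg hnS]
      rw [intervalIntegral.integral_same]
      simp; positivity
  have hside2 : ‖∫ x in d..b, Complex.exp (Complex.I * ψ x)‖ ≤ 3 / r := by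
    by_cases hnT : T.Nonempty
    · apply osc_mono_pos hd1 hd2 hc2 hdmem.2 hrpos
      · intro x hx
        have hxab : x ∈ Set.Icc a b := ⟨le_trans hdmem.1 hx.1, hx.2⟩
        have := hmono d hdmem x hxab hx.1
        have h1 : r ≤ d1 d := (hdT hnT).2
        linarith
      · left; intro x hx
        exact le_trans hlam.le (h x ⟨le_trans hdmem.1 hx.1, hx.2⟩)
    · rw [hd, dif_neg hnT]
      rw [intervalIntegral.integral_same]
      simp; positivity
  have hmid : ‖∫ x in c..d, Complex.exp (Complex.I * ψ x)‖ ≤ 4 * r / lam := by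
    calc ‖∫ x in c..d, Complex.exp (Complex.I * ψ x)‖ ≤ 1 * |d - c| := by
          apply intervalIntegral.norm_integral_le_of_norm_le_const
          intro x _; rw [expIψ_norm]
    _ = d - c := by rw [one_mul, abs_of_nonneg (by linarith)]
    _ ≤ 4 * r / lam := hlen
  have hsplit : ∫ x in a..b, Complex.exp (Complex.I * ψ x)
      = (∫ x in a..c, Complex.exp (Complex.I * ψ x))
        + (∫ x in c..d, Complex.exp (Complex.I * ψ x))
        + (∫ x in d..b, Complex.exp (Complex.I * ψ x)) := by
    rw [intervalIntegral.integral_add_adjacent_intervals (hintegrable a c) (hintegrable c d),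
      intervalIntegral.integral_add_adjacent_intervals (hintegrable a d) (hintegrable d b)]
  rw [hsplit]
  have hrlam : 4 * r / lam = 4 / r := by
    rw [div_eq_div_iff (ne_of_gt hlam) (ne_of_gt hrpos)]
    nlinarith [Real.mul_self_sqrt hlam.le]
  calc ‖_‖ ≤ ‖(∫ x in a..c, Complex.exp (Complex.I * ψ x))
        + (∫ x in c..d, Complex.exp (Complex.I * ψ x))‖
        + ‖∫ x in d..b, Complex.exp (Complex.I * ψ x)‖ := norm_add_le _ _
  _ ≤ (‖∫ x in a..c, Complex.exp (Complex.I * ψ x)‖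
        + ‖∫ x in c..d, Complex.exp (Complex.I * ψ x)‖)
        + ‖∫ x in d..b, Complex.exp (Complex.I * ψ x)‖ :=
      add_le_add_left (norm_add_le _ _) _
  _ ≤ (3 / r + 4 * r / lam) + 3 / r := add_le_add (add_le_add hside1 hmid) hside2
  _ = 10 / r := by rw [hrlam]; ring

lemma vdc2_neg (hd1 : ∀ x, HasDerivAt ψ (d1 x) x) (hd2 : ∀ x, HasDerivAt d1 (d2 x) x)
    (hc2 : Continuous d2) (hab : a ≤ b) (hlam : 0 < lam)
    (h : ∀ x ∈ Set.Icc a b, d2 x ≤ -lam) :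
    ‖∫ x in a..b, Complex.exp (Complex.I * ψ x)‖ ≤ 10 / Real.sqrt lam := by
  rw [← norm_osc_neg_phase ψ a b]
  apply vdc2_pos (ψ := fun y => -(ψ y)) (d1 := fun y => -(d1 y)) (d2 := fun y => -(d2 y))
    (fun x => (hd1 x).neg) (fun x => (hd2 x).neg) hc2.neg hab hlam
  intro x hx
  have := h x hx; linarith

end vdc


section bessel

variable (m t : ℝ)

/-- The phase. -/
noncomputable def bψ (m t k : ℝ) : ℝ := -(m * k + t * Real.sin k)
noncomputable def bd1 (m t k : ℝ) : ℝ := -(m + t * Real.cos k)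
noncomputable def bd2 (m t k : ℝ) : ℝ := t * Real.sin k

lemma bhd1 : ∀ k, HasDerivAt (bψ m t) (bd1 m t k) k := by
  intro k
  unfold bψ bd1
  have h1 : HasDerivAt (fun k : ℝ => m * k) m k := by simpa using (hasDerivAt_id k).const_mul m
  have h2 : HasDerivAt (fun k : ℝ => t * Real.sin k) (t * Real.cos k) k :=
    (Real.hasDerivAt_sin k).const_mul t
  exact (h1.add h2).neg

lemma bhd2 : ∀ k, HasDerivAt (bd1 m t) (bd2 m t k) k := by
  intro k
  have h2 : HasDerivAt (fun k : ℝ => t * Real.cos k) (t * (-Real.sin k)) k :=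
    (Real.hasDerivAt_cos k).const_mul t
  unfold bd1 bd2
  have h : HasDerivAt (fun k => -(m + t * Real.cos k)) _ k := ((hasDerivAt_const k m).add h2).neg
  convert h using 1
  ring
  
lemma bhc2 : Continuous (bd2 m t) := continuous_const.mul Real.continuous_sin

lemma besselJ_norm (m : ℤ) (t : ℝ) :
    ‖besselJ m t‖ = (1 / (2 * Real.pi))
      * ‖∫ k in (0:ℝ)..(2 * Real.pi), Complex.exp (Complex.I * (bψ (m:ℝ) t k : ℝ))‖ := by
  have hcongr : ∀ k ∈ Set.uIcc (0:ℝ) (2*Real.pi),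
      Complex.exp (-Complex.I * m * k - Complex.I * t * Real.sin k)
        = Complex.exp (Complex.I * (bψ (m:ℝ) t k : ℝ)) := by
    intro k _
    congr 1
    simp only [bψ]
    push_cast
    ring
  rw [besselJ, intervalIntegral.integral_congr hcongr, norm_mul]
  congr 1
  have : ((1 : ℂ) / (2 * Real.pi)) = ((1 / (2 * Real.pi) : ℝ) : ℂ) := by push_cast; ring
  rw [this, Complex.norm_real, Real.norm_eq_abs, abs_of_pos (by positivity)]

end bessel

section besselest

lemma sin_lower {δ k : ℝ} (hδ0 : 0 ≤ δ) (hδ : δ ≤ Real.pi/2) (h1 : δ ≤ k) (h2 : k ≤ Real.pi - δ) :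
    Real.sin δ ≤ Real.sin k := by
  rcases le_total k (Real.pi/2) with hk | hk
  · exact Real.sin_le_sin_of_le_of_le_pi_div_two (by linarith [Real.pi_pos]) hk h1
  · rw [← Real.sin_pi_sub k]
    exact Real.sin_le_sin_of_le_of_le_pi_div_two (by linarith [Real.pi_pos]) (by linarith)
      (by linarith)

lemma abs_bd2_int {m t : ℝ} (ht : 0 ≤ t) {u v : ℝ} (huv : u ≤ v) :
    (∫ k in u..v, |bd2 m t k|) ≤ (v - u) * t := by
  have : ∀ k ∈ Set.Icc u v, |bd2 m t k| ≤ t := by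
    intro k _
    rw [bd2, abs_mul, abs_of_nonneg ht]
    calc t * |Real.sin k| ≤ t * 1 := by
          apply mul_le_mul_of_nonneg_left (Real.abs_sin_le_one k) ht
    _ = t := mul_one t
  calc (∫ k in u..v, |bd2 m t k|) ≤ ∫ _ in u..v, t := by
        apply intervalIntegral.integral_mono_on huv _ intervalIntegrable_const this
        exact (bhc2 m t).abs.intervalIntegrable u v
  _ = (v - u) * t := by rw [intervalIntegral.integral_const, smul_eq_mul]

lemma besselJ_bound_small (m : ℤ) (t : ℝ) (ht : 0 < t) (hm : 2 * t ≤ |(m:ℝ)|) :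
    ‖besselJ m t‖ ≤ 2 / t := by
  rw [besselJ_norm]
  have hpi := Real.pi_gt_three
  set lam := |(m:ℝ)| - t with hlam
  have hlampos : 0 < lam := by rw [hlam]; linarith
  have hlamt : t ≤ lam := by rw [hlam]; linarith
  have h2pi : (0:ℝ) ≤ 2 * Real.pi := by linarith
  have hbd : ∀ k ∈ Set.Icc (0:ℝ) (2*Real.pi), lam ≤ |bd1 (m:ℝ) t k| := by
    intro k _
    rw [bd1, abs_neg]
    have h1 : |t * Real.cos k| ≤ t := by
      rw [abs_mul, abs_of_nonneg ht.le]
      calc t * |Real.cos k| ≤ t * 1 :=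
            mul_le_mul_of_nonneg_left (Real.abs_cos_le_one k) ht.le
      _ = t := mul_one t
    calc lam = |(m:ℝ)| - t := hlam
    _ ≤ |(m:ℝ)| - |t * Real.cos k| := by linarith
    _ ≤ |(m:ℝ) + t * Real.cos k| := by
        have := abs_add_le ((m:ℝ) + t * Real.cos k) (-(t * Real.cos k))
        simp only [add_neg_cancel_right, abs_neg] at this
        linarith
  have hcrude := osc_crude (bhd1 (m:ℝ) t) (bhd2 (m:ℝ) t) (bhc2 (m:ℝ) t) h2pi hlampos hbd
  have hint : (∫ k in (0:ℝ)..(2*Real.pi), |bd2 (m:ℝ) t k|) ≤ 2 * Real.pi * t := by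
    have := abs_bd2_int (m := (m:ℝ)) ht.le h2pi
    simpa using this
  have habs : (0:ℝ) ≤ ∫ k in (0:ℝ)..(2*Real.pi), |bd2 (m:ℝ) t k| := by
    apply intervalIntegral.integral_nonneg h2pi
    intro k _; exact abs_nonneg _
  have hstep : ‖∫ k in (0:ℝ)..(2*Real.pi), Complex.exp (Complex.I * (bψ (m:ℝ) t k : ℝ))‖
      ≤ 2 / t + 2 * Real.pi / t := by
    apply hcrude.trans
    apply add_le_add
    · exact div_le_div_of_nonneg_left (by norm_num) ht hlamt
    · calc (∫ k in (0:ℝ)..(2*Real.pi), |bd2 (m:ℝ) t k|) / lam ^ 2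
          ≤ (2 * Real.pi * t) / lam ^ 2 := by
            apply div_le_div_of_nonneg_right hint (by positivity)
      _ ≤ (2 * Real.pi * t) / t ^ 2 := by
            apply div_le_div_of_nonneg_left (by positivity) (by positivity)
            exact pow_le_pow_left₀ ht.le hlamt 2
      _ = 2 * Real.pi / t := by field_simp
  calc (1 / (2*Real.pi)) * ‖∫ k in (0:ℝ)..(2*Real.pi), Complex.exp (Complex.I * (bψ (m:ℝ) t k : ℝ))‖
      ≤ (1 / (2*Real.pi)) * (2 / t + 2 * Real.pi / t) := by
        apply mul_le_mul_of_nonneg_left hstep (by positivity)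
  _ ≤ 2 / t := by
      rw [div_add_div _ _ (ne_of_gt ht) (ne_of_gt ht)]
      rw [div_mul_div_comm, one_mul]
      rw [div_le_div_iff₀ (by positivity) ht]
      ring_nf
      nlinarith

end besselest

section besselmid

lemma norm_piece_le (ψ : ℝ → ℝ) {u v c : ℝ} (huv : u ≤ v) (hc : v - u ≤ c) :
    ‖∫ x in u..v, Complex.exp (Complex.I * (ψ x : ℝ))‖ ≤ c := by
  calc ‖∫ x in u..v, Complex.exp (Complex.I * (ψ x : ℝ))‖ ≤ 1 * |v - u| := by
        apply intervalIntegral.norm_integral_le_of_norm_le_const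
        intro x _; rw [expIψ_norm]
  _ = v - u := by rw [one_mul, abs_of_nonneg (by linarith)]
  _ ≤ c := hc

lemma split5 (f : ℝ → ℂ) (hf : Continuous f) (x0 x1 x2 x3 x4 x5 : ℝ) :
    ∫ x in x0..x5, f x = (∫ x in x0..x1, f x) + (∫ x in x1..x2, f x)
      + (∫ x in x2..x3, f x) + (∫ x in x3..x4, f x) + (∫ x in x4..x5, f x) := by
  have hi : ∀ u v : ℝ, IntervalIntegrable f volume u v := fun u v => hf.intervalIntegrable u v
  rw [intervalIntegral.integral_add_adjacent_intervals (hi x0 x1) (hi x1 x2),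
    intervalIntegral.integral_add_adjacent_intervals (hi x0 x2) (hi x2 x3),
    intervalIntegral.integral_add_adjacent_intervals (hi x0 x3) (hi x3 x4),
    intervalIntegral.integral_add_adjacent_intervals (hi x0 x4) (hi x4 x5)]

lemma besselJ_bound_mid (m : ℤ) (t : ℝ) (ht : 1 ≤ t) :
    ‖besselJ m t‖ ≤ 6 * t ^ (-(1:ℝ)/3) := by
  rw [besselJ_norm]
  have hpi := Real.pi_gt_three
  have hpi' := Real.pi_lt_d2
  have ht0 : (0:ℝ) < t := by linarith
  set δ := t ^ (-(1:ℝ)/3) with hδ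
  have hδ0 : 0 < δ := Real.rpow_pos_of_pos ht0 _
  have hδ1 : δ ≤ 1 := Real.rpow_le_one_of_one_le_of_nonpos ht (by norm_num)
  have hδcube : δ ^ 3 * t = 1 := by
    rw [hδ, ← Real.rpow_natCast (t ^ (-(1:ℝ)/3)) 3, ← Real.rpow_mul ht0.le]
    norm_num
    rw [Real.rpow_neg ht0.le, Real.rpow_one]
    exact inv_mul_cancel₀ (ne_of_gt ht0)
  -- lam for the two big pieces
  set lam := t * Real.sin δ with hlam
  have hsinδ : 2 / Real.pi * δ ≤ Real.sin δ := Real.mul_le_sin hδ0.le (by linarith)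
  have hsinδ0 : 0 < Real.sin δ := lt_of_lt_of_le (by positivity) hsinδ
  have hlam0 : 0 < lam := mul_pos ht0 hsinδ0
  have hδlam : 10 / Real.sqrt lam ≤ 15 * δ := by
    rw [div_le_iff₀ (Real.sqrt_pos.2 hlam0)]
    have hkey : (1:ℝ)/2 ≤ δ ^ 2 * lam := by
      have : 2 / Real.pi * (δ ^ 3 * t) ≤ δ ^ 2 * lam := by
        rw [hlam]
        calc 2 / Real.pi * (δ ^ 3 * t) = δ ^ 2 * (t * (2 / Real.pi * δ)) := by ring
        _ ≤ δ ^ 2 * (t * Real.sin δ) := by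
            apply mul_le_mul_of_nonneg_left _ (by positivity)
            exact mul_le_mul_of_nonneg_left hsinδ ht0.le
      rw [hδcube, mul_one] at this
      apply le_trans _ this
      rw [le_div_iff₀ Real.pi_pos]
      linarith
    have hsq : Real.sqrt (δ ^ 2 * lam) = δ * Real.sqrt lam := by
      rw [Real.sqrt_mul (by positivity), Real.sqrt_sq hδ0.le]
    have h1 : Real.sqrt (1/2 : ℝ) ≤ δ * Real.sqrt lam := by
      rw [← hsq]; exact Real.sqrt_le_sqrt hkey
    have h2 : (0.7:ℝ) ≤ Real.sqrt (1/2 : ℝ) := by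
      rw [show (1/2:ℝ) = 0.5 by norm_num]
      have := Real.sq_sqrt (show (0:ℝ) ≤ 0.5 by norm_num)
      nlinarith [Real.sqrt_nonneg (0.5:ℝ)]
    nlinarith
  have horder : (0:ℝ) ≤ δ ∧ δ ≤ Real.pi - δ ∧ Real.pi - δ ≤ Real.pi + δ
      ∧ Real.pi + δ ≤ 2*Real.pi - δ ∧ 2*Real.pi - δ ≤ 2*Real.pi := by
    refine ⟨hδ0.le, by linarith, by linarith, by linarith, by linarith⟩
  obtain ⟨ho1, ho2, ho3, ho4, ho5⟩ := horder
  -- pieces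
  have hP2 : ‖∫ k in δ..(Real.pi - δ), Complex.exp (Complex.I * (bψ (m:ℝ) t k : ℝ))‖
      ≤ 15 * δ := by
    apply le_trans _ hδlam
    apply vdc2_pos (bhd1 (m:ℝ) t) (bhd2 (m:ℝ) t) (bhc2 (m:ℝ) t) ho2 hlam0
    intro k hk
    rw [bd2, hlam]
    apply mul_le_mul_of_nonneg_left _ ht0.le
    exact sin_lower hδ0.le (by linarith) hk.1 hk.2
  have hP4 : ‖∫ k in (Real.pi + δ)..(2*Real.pi - δ), Complex.exp (Complex.I * (bψ (m:ℝ) t k : ℝ))‖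
      ≤ 15 * δ := by
    apply le_trans _ hδlam
    apply vdc2_neg (bhd1 (m:ℝ) t) (bhd2 (m:ℝ) t) (bhc2 (m:ℝ) t) ho4 hlam0
    intro k hk
    rw [bd2]
    have hsk : Real.sin k ≤ -Real.sin δ := by
      have h1 : Real.sin (k - Real.pi) = -Real.sin k := Real.sin_sub_pi k
      have h2 : Real.sin δ ≤ Real.sin (k - Real.pi) := by
        apply sin_lower hδ0.le (by linarith)
        · linarith [hk.1]
        · linarith [hk.2]
      linarith
    rw [hlam]
    nlinarith
  have hsplit := split5 (fun k => Complex.exp (Complex.I * (bψ (m:ℝ) t k : ℝ)))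
    (continuous_expI (bhd1 (m:ℝ) t)) 0 δ (Real.pi - δ) (Real.pi + δ) (2*Real.pi - δ) (2*Real.pi)
  rw [hsplit]
  have htotal : ‖(∫ k in (0:ℝ)..δ, Complex.exp (Complex.I * (bψ (m:ℝ) t k : ℝ)))
      + (∫ k in δ..(Real.pi - δ), Complex.exp (Complex.I * (bψ (m:ℝ) t k : ℝ)))
      + (∫ k in (Real.pi - δ)..(Real.pi + δ), Complex.exp (Complex.I * (bψ (m:ℝ) t k : ℝ)))
      + (∫ k in (Real.pi + δ)..(2*Real.pi - δ), Complex.exp (Complex.I * (bψ (m:ℝ) t k : ℝ)))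
      + (∫ k in (2*Real.pi - δ)..(2*Real.pi), Complex.exp (Complex.I * (bψ (m:ℝ) t k : ℝ)))‖
      ≤ δ + 15 * δ + 2 * δ + 15 * δ + δ := by
    apply le_trans (norm_add_le _ _)
    apply add_le_add _ (norm_piece_le _ ho5 (by linarith))
    apply le_trans (norm_add_le _ _)
    apply add_le_add _ hP4
    apply le_trans (norm_add_le _ _)
    apply add_le_add _ (norm_piece_le _ ho3 (by linarith))
    apply le_trans (norm_add_le _ _)
    exact add_le_add (norm_piece_le _ ho1 (by linarith)) hP2
  apply le_trans (mul_le_mul_of_nonneg_left htotal (by positivity))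
  have : δ + 15 * δ + 2 * δ + 15 * δ + δ = 34 * δ := by ring
  rw [this]
  rw [← mul_assoc]
  apply mul_le_mul_of_nonneg_right _ hδ0.le
  rw [div_mul_eq_mul_div, div_le_iff₀ (by positivity)]
  linarith

end besselmid



section bessellarge

lemma sqrt2_ge : (1.4:ℝ) ≤ Real.sqrt 2 := by
  have := Real.sq_sqrt (show (0:ℝ) ≤ 2 by norm_num)
  nlinarith [Real.sqrt_nonneg (2:ℝ)]

lemma besselJ_bound_large (m : ℤ) (t : ℝ) (ht : 1 ≤ t) (hm : 2 * |(m:ℝ)| ≤ t) :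
    ‖besselJ m t‖ ≤ 29 / Real.sqrt t := by
  rw [besselJ_norm]
  have hpi := Real.pi_gt_three
  have hpi' := Real.pi_lt_d2
  have ht0 : (0:ℝ) < t := by linarith
  have hst0 : 0 < Real.sqrt t := Real.sqrt_pos.2 ht0
  have hst1 : 1 ≤ Real.sqrt t := Real.one_le_sqrt.2 ht
  have htst : 1 / t ≤ 1 / Real.sqrt t := by
    apply div_le_div_of_nonneg_left zero_le_one hst0
    nlinarith [Real.sq_sqrt ht0.le]
  have hs2 := sqrt2_ge
  have hs2' : Real.sqrt 2 ≤ 1.5 := by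
    rw [show (1.5:ℝ) = Real.sqrt (1.5^2) from (Real.sqrt_sq (by norm_num)).symm]
    apply Real.sqrt_le_sqrt; norm_num
  -- cos lower bound helper on [0, π/4]
  have hcos1 : ∀ k ∈ Set.Icc (0:ℝ) (Real.pi/4), Real.sqrt 2 / 2 ≤ Real.cos k := by
    intro k hk
    rw [← Real.cos_pi_div_four]
    exact Real.cos_le_cos_of_nonneg_of_le_pi hk.1 (by linarith) hk.2
  -- d1 lower bound on sets where |cos| ≥ √2/2
  have hmabs : |(m:ℝ)| ≤ t / 2 := by linarith
  -- Piece bounds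
  set lam2 := t * (Real.sqrt 2 / 2) with hlam2
  have hlam2pos : 0 < lam2 := by positivity
  have hvdcbd : 10 / Real.sqrt lam2 ≤ 15 / Real.sqrt t := by
    rw [div_le_div_iff₀ (Real.sqrt_pos.2 hlam2pos) hst0]
    have h1 : Real.sqrt lam2 = Real.sqrt t * Real.sqrt (Real.sqrt 2/2) := by
      rw [hlam2, Real.sqrt_mul ht0.le]
    rw [h1]
    have h2 : (0.83:ℝ) ≤ Real.sqrt (Real.sqrt 2/2) := by
      have h3 : (0.83:ℝ)^2 ≤ Real.sqrt 2 / 2 := by nlinarith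
      nlinarith [Real.sq_sqrt (show (0:ℝ) ≤ Real.sqrt 2/2 by positivity),
        Real.sqrt_nonneg (Real.sqrt 2/2)]
    nlinarith
  have hP2 : ‖∫ k in (Real.pi/4)..(3*Real.pi/4), Complex.exp (Complex.I * (bψ (m:ℝ) t k : ℝ))‖
      ≤ 15 / Real.sqrt t := by
    apply le_trans _ hvdcbd
    apply vdc2_pos (bhd1 (m:ℝ) t) (bhd2 (m:ℝ) t) (bhc2 (m:ℝ) t) (by linarith) hlam2pos
    intro k hk
    rw [bd2, hlam2]
    apply mul_le_mul_of_nonneg_left _ ht0.le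
    rw [← Real.sin_pi_div_four]
    exact sin_lower (by positivity) (by linarith) hk.1 (by linarith [hk.2])
  have hP4 : ‖∫ k in (5*Real.pi/4)..(7*Real.pi/4), Complex.exp (Complex.I * (bψ (m:ℝ) t k : ℝ))‖
      ≤ 15 / Real.sqrt t := by
    apply le_trans _ hvdcbd
    apply vdc2_neg (bhd1 (m:ℝ) t) (bhd2 (m:ℝ) t) (bhc2 (m:ℝ) t) (by linarith) hlam2pos
    intro k hk
    rw [bd2, hlam2]
    have hsk : Real.sin k ≤ -(Real.sqrt 2/2) := by
      have h1 : Real.sin (k - Real.pi) = -Real.sin k := Real.sin_sub_pi k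
      have h2 : Real.sqrt 2/2 ≤ Real.sin (k - Real.pi) := by
        rw [← Real.sin_pi_div_four]
        apply sin_lower (by positivity) (by linarith)
        · linarith [hk.1]
        · linarith [hk.2]
      linarith
    nlinarith
  -- crude pieces: need |bd1| ≥ t/5 where |cos k| ≥ √2/2
  have hcrude_bd : ∀ k : ℝ, Real.sqrt 2/2 ≤ |Real.cos k| → t/5 ≤ |bd1 (m:ℝ) t k| := by
    intro k hck
    rw [bd1, abs_neg]
    have h1 : t * (Real.sqrt 2/2) ≤ |t * Real.cos k| := by
      rw [abs_mul, abs_of_nonneg ht0.le]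
      exact mul_le_mul_of_nonneg_left hck ht0.le
    have h2 : |t * Real.cos k| - |(m:ℝ)| ≤ |(m:ℝ) + t * Real.cos k| := by
      have h3 := abs_sub_abs_le_abs_sub (t * Real.cos k) (-(m:ℝ))
      rw [abs_neg] at h3
      have h4 : t * Real.cos k - -(m:ℝ) = (m:ℝ) + t * Real.cos k := by ring
      rw [h4] at h3
      linarith
    nlinarith
  have hcrude_piece : ∀ u v : ℝ, u ≤ v → v - u ≤ Real.pi/2 →
      (∀ k ∈ Set.Icc u v, Real.sqrt 2/2 ≤ |Real.cos k|) →
      ‖∫ k in u..v, Complex.exp (Complex.I * (bψ (m:ℝ) t k : ℝ))‖ ≤ 50 / t := by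
    intro u v huv hlen hcos
    have hbd : ∀ k ∈ Set.Icc u v, t/5 ≤ |bd1 (m:ℝ) t k| :=
      fun k hk => hcrude_bd k (hcos k hk)
    have h5 : (0:ℝ) < t/5 := by linarith
    apply le_trans (osc_crude (bhd1 (m:ℝ) t) (bhd2 (m:ℝ) t) (bhc2 (m:ℝ) t) huv h5 hbd)
    have hint : (∫ k in u..v, |bd2 (m:ℝ) t k|) ≤ (Real.pi/2) * t := by
      apply le_trans (abs_bd2_int ht0.le huv)
      apply mul_le_mul_of_nonneg_right hlen ht0.le
    have habs : (0:ℝ) ≤ ∫ k in u..v, |bd2 (m:ℝ) t k| :=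
      intervalIntegral.integral_nonneg huv (fun k _ => abs_nonneg _)
    have e1 : 2 / (t/5) = 10 / t := by field_simp; norm_num
    have e2 : ((Real.pi/2) * t) / (t/5) ^ 2 = (25 * Real.pi / 2) / t := by
      field_simp; ring
    rw [e1]
    have : (∫ k in u..v, |bd2 (m:ℝ) t k|) / (t/5)^2 ≤ (25 * Real.pi/2) / t := by
      rw [← e2]
      apply div_le_div_of_nonneg_right hint (by positivity)
    have hfin : (25 * Real.pi/2) / t ≤ 40 / t := by
      apply div_le_div_of_nonneg_right _ ht0.le
      linarith
    have e3 : (10:ℝ)/t + 40/t = 50/t := by ring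
    linarith
  have hP1 : ‖∫ k in (0:ℝ)..(Real.pi/4), Complex.exp (Complex.I * (bψ (m:ℝ) t k : ℝ))‖
      ≤ 50 / t := by
    apply hcrude_piece _ _ (by linarith) (by linarith)
    intro k hk
    exact le_trans (hcos1 k hk) (le_abs_self _)
  have hP3 : ‖∫ k in (3*Real.pi/4)..(5*Real.pi/4), Complex.exp (Complex.I * (bψ (m:ℝ) t k : ℝ))‖
      ≤ 50 / t := by
    apply hcrude_piece _ _ (by linarith) (by linarith)
    intro k hk
    have h1 : Real.cos (k - Real.pi) = -Real.cos k := Real.cos_sub_pi k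
    have h2 : Real.sqrt 2/2 ≤ |Real.cos (k - Real.pi)| := by
      rw [abs_of_nonneg]
      · rcases le_total 0 (k - Real.pi) with hs | hs
        · rw [← Real.cos_pi_div_four]
          apply Real.cos_le_cos_of_nonneg_of_le_pi hs (by linarith)
          linarith [hk.2]
        · rw [← Real.cos_neg (k - Real.pi), ← Real.cos_pi_div_four]
          apply Real.cos_le_cos_of_nonneg_of_le_pi (by linarith) (by linarith)
          linarith [hk.1]
      · apply Real.cos_nonneg_of_mem_Icc
        constructor
        · linarith [hk.1]
        · linarith [hk.2]
    rw [h1, abs_neg] at h2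
    exact h2
  have hP5 : ‖∫ k in (7*Real.pi/4)..(2*Real.pi), Complex.exp (Complex.I * (bψ (m:ℝ) t k : ℝ))‖
      ≤ 50 / t := by
    apply hcrude_piece _ _ (by linarith) (by linarith)
    intro k hk
    have h1 : Real.cos (2*Real.pi - k) = Real.cos k := by
      rw [Real.cos_two_pi_sub]
    rw [← h1]
    rw [abs_of_nonneg]
    · rw [← Real.cos_pi_div_four]
      apply Real.cos_le_cos_of_nonneg_of_le_pi (by linarith [hk.2]) (by linarith)
      linarith [hk.1]
    · apply Real.cos_nonneg_of_mem_Icc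
      constructor
      · linarith [hk.2]
      · linarith [hk.1]
  have hsplit := split5 (fun k => Complex.exp (Complex.I * (bψ (m:ℝ) t k : ℝ)))
    (continuous_expI (bhd1 (m:ℝ) t)) 0 (Real.pi/4) (3*Real.pi/4) (5*Real.pi/4) (7*Real.pi/4)
    (2*Real.pi)
  rw [hsplit]
  have htotal : ‖(∫ k in (0:ℝ)..(Real.pi/4), Complex.exp (Complex.I * (bψ (m:ℝ) t k : ℝ)))
      + (∫ k in (Real.pi/4)..(3*Real.pi/4), Complex.exp (Complex.I * (bψ (m:ℝ) t k : ℝ)))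
      + (∫ k in (3*Real.pi/4)..(5*Real.pi/4), Complex.exp (Complex.I * (bψ (m:ℝ) t k : ℝ)))
      + (∫ k in (5*Real.pi/4)..(7*Real.pi/4), Complex.exp (Complex.I * (bψ (m:ℝ) t k : ℝ)))
      + (∫ k in (7*Real.pi/4)..(2*Real.pi), Complex.exp (Complex.I * (bψ (m:ℝ) t k : ℝ)))‖
      ≤ 50 / t + 15 / Real.sqrt t + 50 / t + 15 / Real.sqrt t + 50 / t := by
    apply le_trans (norm_add_le _ _)
    apply add_le_add _ hP5
    apply le_trans (norm_add_le _ _)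
    apply add_le_add _ hP4
    apply le_trans (norm_add_le _ _)
    apply add_le_add _ hP3
    apply le_trans (norm_add_le _ _)
    exact add_le_add hP1 hP2
  apply le_trans (mul_le_mul_of_nonneg_left htotal (by positivity))
  have hsum : 50 / t + 15 / Real.sqrt t + 50 / t + 15 / Real.sqrt t + 50 / t
      ≤ 180 / Real.sqrt t := by
    have : 150 / t ≤ 150 / Real.sqrt t := by
      have := htst
      calc (150:ℝ) / t = 150 * (1/t) := by ring
      _ ≤ 150 * (1/Real.sqrt t) := by linarith
      _ = 150 / Real.sqrt t := by ring
    have e1 : (50:ℝ)/t + 50/t + 50/t = 150/t := by ring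
    have e2 : (15:ℝ)/Real.sqrt t + 15/Real.sqrt t = 30/Real.sqrt t := by ring
    have e3 : (150:ℝ)/Real.sqrt t + 30/Real.sqrt t = 180/Real.sqrt t := by ring
    linarith
  apply le_trans (mul_le_mul_of_nonneg_left hsum (by positivity))
  rw [div_mul_div_comm, one_mul, div_le_div_iff₀ (by positivity) hst0]
  nlinarith [Real.pi_gt_d2, hst0]

end bessellarge


lemma besselJ_continuous (m : ℤ) : Continuous fun t => besselJ m t := by
  unfold besselJ
  apply Continuous.mul continuous_const
  apply intervalIntegral.continuous_parametric_intervalIntegral_of_continuous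
    (μ := volume) (a₀ := (0:ℝ))
  · apply Complex.continuous_exp.comp
    apply Continuous.sub
    · exact (continuous_const.mul (Complex.continuous_ofReal.comp continuous_snd))
    · exact ((continuous_const.mul (Complex.continuous_ofReal.comp continuous_fst)).mul
        (Complex.continuous_ofReal.comp (Real.continuous_sin.comp continuous_snd)))
  · exact continuous_const

/-- For every integer `d ≥ 3` there is `C = C(d) > 0` such that for every
`m ∈ ℤ` the function `t ↦ |J_m(t)|^d` is integrable on `[1,∞)` with
`∫₁^∞ |J_m(t)|^d dt ≤ C`. -/
theorem statement3 (d : ℕ) (hd : 3 ≤ d) :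
    ∃ C : ℝ, 0 < C ∧ ∀ m : ℤ,
      IntegrableOn (fun t : ℝ => ‖besselJ m t‖ ^ d) (Set.Ici (1:ℝ)) ∧
      ∫ t in Set.Ici (1:ℝ), ‖besselJ m t‖ ^ d ≤ C := by
  refine ⟨2^d + 2 * 29^d + 3 * 6^d, by positivity, fun m => ?_⟩
  set A := max 1 (|(m:ℝ)|/2) with hA
  have hA1 : (1:ℝ) ≤ A := le_max_left _ _
  have hA0 : (0:ℝ) < A := by linarith
  set g : ℝ → ℝ := fun t => 2^d * t ^ (-(3:ℝ)) + 29^d * t ^ (-(3:ℝ)/2)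
    + Set.indicator (Set.Icc A (4*A)) (fun t => 6^d / t) t with hg
  -- pointwise bound
  have hpt : ∀ t ∈ Set.Ici (1:ℝ), ‖besselJ m t‖ ^ d ≤ g t := by
    intro t ht
    rw [Set.mem_Ici] at ht
    have ht0 : (0:ℝ) < t := by linarith
    have hind_nonneg : 0 ≤ Set.indicator (Set.Icc A (4*A)) (fun t => (6:ℝ)^d / t) t := by
      apply Set.indicator_nonneg
      intro x hx
      have : (0:ℝ) < x := lt_of_lt_of_le hA0 hx.1
      positivity
    have h1nonneg : (0:ℝ) ≤ 2^d * t ^ (-(3:ℝ)) := by positivity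
    have h2nonneg : (0:ℝ) ≤ 29^d * t ^ (-(3:ℝ)/2) := by positivity
    by_cases hc1 : 2 * t ≤ |(m:ℝ)|
    · -- region 1
      have hb := besselJ_bound_small m t ht0 hc1
      have : ‖besselJ m t‖ ^ d ≤ (2/t) ^ d := pow_le_pow_left₀ (norm_nonneg _) hb d
      have e3 : t ^ (-(3:ℝ)) = (t ^ (3:ℕ))⁻¹ := by
        rw [Real.rpow_neg ht0.le, ← Real.rpow_natCast t 3]
        norm_num
      have h2 : (2/t : ℝ) ^ d ≤ 2^d * t ^ (-(3:ℝ)) := by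
        rw [div_pow, e3, ← div_eq_mul_inv]
        apply div_le_div_of_nonneg_left (by positivity) (by positivity)
        exact pow_le_pow_right₀ (by linarith) hd
      rw [hg]
      simp only []
      linarith
    · by_cases hc2 : 2 * |(m:ℝ)| ≤ t
      · -- region 3
        have hb := besselJ_bound_large m t ht hc2
        have hst0 : 0 < Real.sqrt t := Real.sqrt_pos.2 ht0
        have h1 : ‖besselJ m t‖ ^ d ≤ (29 / Real.sqrt t) ^ d :=
          pow_le_pow_left₀ (norm_nonneg _) hb d
        have h2 : (29 / Real.sqrt t : ℝ) ^ d ≤ 29^d * t ^ (-(3:ℝ)/2) := by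
          rw [div_pow]
          rw [Real.sqrt_eq_rpow, ← Real.rpow_natCast (t ^ ((1:ℝ)/2)) d, ← Real.rpow_mul ht0.le]
          rw [div_eq_mul_inv, ← Real.rpow_neg ht0.le]
          apply mul_le_mul_of_nonneg_left _ (by positivity)
          apply Real.rpow_le_rpow_of_exponent_le ht
          have : (3:ℝ) ≤ (d:ℝ) := by exact_mod_cast hd
          linarith
        have := le_trans h1 h2
        rw [hg]
        simp only []
        linarith
      · -- region 2
        push_neg at hc1 hc2
        have hb := besselJ_bound_mid m t ht
        have h1 : ‖besselJ m t‖ ^ d ≤ (6 * t ^ (-(1:ℝ)/3)) ^ d :=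
          pow_le_pow_left₀ (norm_nonneg _) hb d
        have h2 : ((6:ℝ) * t ^ (-(1:ℝ)/3)) ^ d ≤ 6^d / t := by
          rw [mul_pow]
          rw [← Real.rpow_natCast (t ^ (-(1:ℝ)/3)) d, ← Real.rpow_mul ht0.le]
          rw [div_eq_mul_inv]
          apply mul_le_mul_of_nonneg_left _ (by positivity)
          have h3 : t ^ (-(1:ℝ)/3 * d) ≤ t ^ (-(1:ℝ)) := by
            apply Real.rpow_le_rpow_of_exponent_le ht
            have : (3:ℝ) ≤ (d:ℝ) := by exact_mod_cast hd
            nlinarith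
          rw [Real.rpow_neg_one] at h3
          exact h3
        have hmem : t ∈ Set.Icc A (4*A) := by
          constructor
          · apply max_le ht; linarith
          · have : |(m:ℝ)|/2 ≤ A := le_max_right _ _
            linarith
        rw [hg]
        simp only []
        rw [Set.indicator_of_mem hmem]
        linarith
  have hmeas : MeasurableSet (Set.Icc A (4*A)) := measurableSet_Icc
  -- integrability of g
  have hi1 : IntegrableOn (fun t : ℝ => 2^d * t ^ (-(3:ℝ))) (Set.Ici (1:ℝ)) := by
    rw [integrableOn_Ici_iff_integrableOn_Ioi]
    exact (integrableOn_Ioi_rpow_of_lt (by norm_num) one_pos).const_mul _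
  have hi2 : IntegrableOn (fun t : ℝ => 29^d * t ^ (-(3:ℝ)/2)) (Set.Ici (1:ℝ)) := by
    rw [integrableOn_Ici_iff_integrableOn_Ioi]
    exact (integrableOn_Ioi_rpow_of_lt (by norm_num) one_pos).const_mul _
  have hiIcc : IntegrableOn (fun t : ℝ => (6:ℝ)^d / t) (Set.Icc A (4*A)) := by
    apply ContinuousOn.integrableOn_Icc
    apply ContinuousOn.div continuousOn_const continuousOn_id
    intro x hx
    have : (0:ℝ) < x := lt_of_lt_of_le hA0 hx.1
    exact ne_of_gt this
  have hi3 : IntegrableOn (Set.indicator (Set.Icc A (4*A)) (fun t => (6:ℝ)^d / t)) (Set.Ici (1:ℝ)) := by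
    apply Integrable.integrableOn
    rw [integrable_indicator_iff hmeas]
    exact hiIcc
  have hgint : IntegrableOn g (Set.Ici (1:ℝ)) := (hi1.add hi2).add hi3
  have hJcont : Continuous (fun t : ℝ => ‖besselJ m t‖ ^ d) :=
    ((besselJ_continuous m).norm.pow d)
  have hJint : IntegrableOn (fun t : ℝ => ‖besselJ m t‖ ^ d) (Set.Ici (1:ℝ)) := by
    apply Integrable.mono' hgint (hJcont.aestronglyMeasurable.restrict)
    rw [ae_restrict_iff' measurableSet_Ici]
    apply ae_of_all
    intro t ht
    rw [Real.norm_eq_abs, abs_of_nonneg (by positivity)]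
    exact hpt t ht
  refine ⟨hJint, ?_⟩
  have hmono : ∫ t in Set.Ici (1:ℝ), ‖besselJ m t‖ ^ d ≤ ∫ t in Set.Ici (1:ℝ), g t :=
    setIntegral_mono_on hJint hgint measurableSet_Ici hpt
  apply hmono.trans
  -- compute/bound integral of g
  have hsplit : ∫ t in Set.Ici (1:ℝ), g t
      = (∫ t in Set.Ici (1:ℝ), 2^d * t ^ (-(3:ℝ)))
        + (∫ t in Set.Ici (1:ℝ), 29^d * t ^ (-(3:ℝ)/2))
        + (∫ t in Set.Ici (1:ℝ), Set.indicator (Set.Icc A (4*A)) (fun t => (6:ℝ)^d / t) t) := by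
    have e : (∫ t in Set.Ici (1:ℝ), g t) = ∫ t in Set.Ici (1:ℝ),
        ((2:ℝ)^d * t ^ (-(3:ℝ)) + (29:ℝ)^d * t ^ (-(3:ℝ)/2)
          + Set.indicator (Set.Icc A (4*A)) (fun t => (6:ℝ)^d / t) t) := rfl
    have h12 := MeasureTheory.integral_add (μ := volume.restrict (Set.Ici (1:ℝ))) hi1 hi2
    have hall := MeasureTheory.integral_add (μ := volume.restrict (Set.Ici (1:ℝ))) (hi1.add hi2) hi3
    simp only [Pi.add_apply] at h12 hall
    rw [e, hall, h12]
  rw [hsplit]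
  have hv1 : (∫ t in Set.Ici (1:ℝ), 2^d * t ^ (-(3:ℝ))) ≤ 2^d := by
    rw [integral_Ici_eq_integral_Ioi, MeasureTheory.integral_const_mul, integral_Ioi_rpow_of_lt (by norm_num) one_pos]
    rw [show ((-(3:ℝ)) + 1) = -2 by norm_num]
    rw [Real.one_rpow]
    have : -(1:ℝ) / (-2) = 1/2 := by norm_num
    rw [this]
    nlinarith [pow_pos (show (0:ℝ) < 2 by norm_num) d]
  have hv2 : (∫ t in Set.Ici (1:ℝ), 29^d * t ^ (-(3:ℝ)/2)) ≤ 2 * 29^d := by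
    rw [integral_Ici_eq_integral_Ioi, MeasureTheory.integral_const_mul, integral_Ioi_rpow_of_lt (by norm_num) one_pos]
    rw [show ((-(3:ℝ)/2) + 1) = -(1/2) by norm_num]
    rw [Real.one_rpow]
    have : -(1:ℝ) / (-(1/2)) = 2 := by norm_num
    rw [this]
    linarith [pow_pos (show (0:ℝ) < 29 by norm_num) d]
  have hv3 : (∫ t in Set.Ici (1:ℝ), Set.indicator (Set.Icc A (4*A)) (fun t => (6:ℝ)^d / t) t)
      ≤ 3 * 6^d := by
    rw [setIntegral_indicator hmeas]
    have hinter : Set.Ici (1:ℝ) ∩ Set.Icc A (4*A) = Set.Icc A (4*A) := by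
      apply Set.inter_eq_right.2
      intro x hx
      exact le_trans hA1 hx.1
    have hinter' : Set.Icc A (4*A) ∩ Set.Ici (1:ℝ) = Set.Icc A (4*A) := by
      apply Set.inter_eq_left.2
      intro x hx
      exact le_trans hA1 hx.1
    rw [hinter] <;> try rw [hinter']
    have hconst : ∀ x ∈ Set.Icc A (4*A), (6:ℝ)^d / x ≤ (6:ℝ)^d / A := by
      intro x hx
      apply div_le_div_of_nonneg_left (by positivity) hA0 hx.1
    calc (∫ t in Set.Icc A (4*A), (6:ℝ)^d / t)
        ≤ ∫ _ in Set.Icc A (4*A), (6:ℝ)^d / A :=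
          setIntegral_mono_on hiIcc (integrableOn_const (by
            rw [Real.volume_Icc]; exact ENNReal.ofReal_ne_top)) measurableSet_Icc hconst
    _ = (volume (Set.Icc A (4*A))).toReal * ((6:ℝ)^d / A) := by
        rw [setIntegral_const, smul_eq_mul, measureReal_def]
    _ = (3*A) * ((6:ℝ)^d / A) := by
        rw [Real.volume_Icc, ENNReal.toReal_ofReal (by linarith)]
        ring
    _ = 3 * 6^d := by field_simp
  linarith
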